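/- Let 0 < Y < 2 and define J_Y(λ) = √(λ/(2π)) ∫_0^∞ e^{−λh/2} h^{(Y−1)/2} (1+h)^{−Y/2} dh for λ > 0. Let X be Gamma(Y/2)-distributed, W an independent Gamma(1) (standard exponential) variable, Z an independent Gamma(1/2) variable, and G an independent standard normal variable. Then for every λ > 0: J_Y(λ) = P( G² ≥ λ X/W ) = E[ exp( −(λ/2) · X/Z ) ]. -/

import Mathlib

open MeasureTheory ProbabilityTheory Real Set
open scoped ENNReal NNReal

-- density to integral conversion
lemma integral_gammaMeasure_eq {a : ℝ} (ha : 0 < a) (f : ℝ → ℝ) :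
    ∫ x, f x ∂(gammaMeasure a 1) = ∫ x, gammaPDFReal a 1 x * f x := by
  rw [gammaMeasure, show gammaPDF a 1 = fun x => ((gammaPDFReal a 1 x).toNNReal : ℝ≥0∞) from rfl,
    integral_withDensity_eq_integral_smul ((measurable_gammaPDFReal a 1).real_toNNReal) f]
  congr 1 with x
  rw [NNReal.smul_def, Real.coe_toNNReal _ (gammaPDFReal_nonneg ha one_pos x), smul_eq_mul]

lemma integral_gaussianReal_eq (f : ℝ → ℝ) :
    ∫ x, f x ∂(gaussianReal 0 1) = ∫ x, gaussianPDFReal 0 1 x * f x := by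
  rw [gaussianReal_of_var_ne_zero 0 one_ne_zero,
    show gaussianPDF 0 1 = fun x => ((gaussianPDFReal 0 1 x).toNNReal : ℝ≥0∞) from rfl,
    integral_withDensity_eq_integral_smul ((measurable_gaussianPDFReal 0 1).real_toNNReal) f]
  congr 1 with x
  rw [NNReal.smul_def, Real.coe_toNNReal _ (gaussianPDFReal_nonneg 0 1 x), smul_eq_mul]

lemma gammaPDFReal_vanish {a : ℝ} (ha : a ≠ 1) {x : ℝ} (hx : x ∉ Ioi (0:ℝ)) :
    gammaPDFReal a 1 x = 0 := by
  rw [mem_Ioi, not_lt] at hx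
  rcases lt_or_eq_of_le hx with h | h
  · rw [gammaPDFReal, if_neg (not_le.2 h)]
  · rw [gammaPDFReal, h]
    simp [Real.zero_rpow (sub_ne_zero.2 ha)]

lemma gamma_laplace {a s : ℝ} (ha : 0 < a) (ha1 : a < 1) (hs : 0 ≤ s) :
    ∫ x, Real.exp (-(s * x)) ∂(gammaMeasure a 1) = (1 + s) ^ (-a) := by
  rw [integral_gammaMeasure_eq ha]
  rw [← setIntegral_eq_integral_of_forall_compl_eq_zero
    (s := Ioi 0) (fun x hx => by rw [gammaPDFReal_vanish ha1.ne hx, zero_mul])]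
  rw [setIntegral_congr_fun (g := fun x => (Gamma a)⁻¹ * (x ^ (a-1) * Real.exp (-((1+s) * x))))
    measurableSet_Ioi (fun x hx => ?_)]
  · rw [integral_const_mul, integral_rpow_mul_exp_neg_mul_Ioi ha (by linarith : (0:ℝ) < 1 + s),
      one_div, Real.inv_rpow (by linarith), Real.rpow_neg (by linarith)]
    field_simp [(Real.Gamma_pos_of_pos ha).ne']
  · rw [gammaPDFReal, if_pos (le_of_lt hx), Real.one_rpow]
    simp only [mul_assoc, ← Real.exp_add]
    rw [one_div, show -(1*x) + -(s*x) = -((1+s)*x) by ring]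

/-- `J_Y(λ) = √(λ/(2π)) ∫_0^∞ e^{-λh/2} h^{(Y-1)/2} (1+h)^{-Y/2} dh`. -/
noncomputable def JFun (Y l : ℝ) : ℝ :=
  Real.sqrt (l / (2 * π)) *
    ∫ h in Ioi (0:ℝ), Real.exp (-(l * h / 2)) * h ^ ((Y-1)/2) * (1+h) ^ (-(Y/2))

lemma JFun_eq_gamma_int {Y l : ℝ} (hl : 0 < l) :
    JFun Y l = ∫ z in Ioi (0:ℝ), gammaPDFReal (1/2) 1 z * (1 + l/(2*z)) ^ (-(Y/2)) := by
  have hl2 : (0:ℝ) < l/2 := by positivity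
  have key : ∀ h ∈ Ioi (0:ℝ),
      Real.sqrt (l/(2*π)) * (Real.exp (-(l * h / 2)) * h ^ ((Y-1)/2) * (1+h) ^ (-(Y/2)))
      = (l/2) * (gammaPDFReal (1/2) 1 ((l/2)*h) * (1 + l/(2*((l/2)*h))) ^ (-(Y/2))) := by
    intro h hh
    rw [mem_Ioi] at hh
    have hx : (0:ℝ) < l/2*h := by positivity
    rw [gammaPDFReal, if_pos hx.le, Real.Gamma_one_half_eq, Real.one_rpow]
    rw [show (2*((l/2)*h)) = l*h by ring, show l/(l*h) = 1/h by field_simp]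
    rw [show ((1:ℝ) + 1/h) = (1+h)/h by field_simp; ring]
    rw [Real.div_rpow (by positivity) hh.le, div_eq_mul_inv ((1+h) ^ (-(Y/2))),
      ← Real.rpow_neg hh.le, neg_neg]
    rw [show ((1:ℝ)/2 - 1 : ℝ) = -(1/2) by norm_num, Real.mul_rpow hl2.le hh.le]
    rw [show (-(1*((l/2)*h))) = -(l*h/2) by ring]
    have e1 : h ^ ((Y-1)/2) = h ^ (-(1/2):ℝ) * h ^ (Y/2) := by
      rw [← Real.rpow_add hh, show (-(1/2) + Y/2 : ℝ) = (Y-1)/2 by ring]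
    have e3 : Real.sqrt (l/(2*π)) = (l/2) * (l/2) ^ (-(1/2):ℝ) * (Real.sqrt π)⁻¹ := by
      rw [Real.sqrt_eq_rpow, Real.sqrt_eq_rpow, show l/(2*π) = (l/2)/π by ring,
        Real.div_rpow hl2.le pi_pos.le]
      nth_rewrite 2 [← Real.rpow_one (l/2)]
      rw [← Real.rpow_add hl2, show ((1:ℝ) + -(1/2) : ℝ) = 1/2 by norm_num, div_eq_mul_inv]
    rw [e1, e3]
    ring
  rw [JFun, ← integral_const_mul, setIntegral_congr_fun measurableSet_Ioi key,
    integral_const_mul, integral_comp_mul_left_Ioi (fun z => gammaPDFReal (1/2) 1 z * (1 + l/(2*z)) ^ (-(Y/2))) 0 hl2, mul_zero, smul_eq_mul]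
  rw [← mul_assoc, mul_inv_cancel₀ hl2.ne', one_mul]

lemma gauss_eq_gamma_int {Y l : ℝ} (hY0 : 0 < Y) (hl : 0 < l) :
    (∫ x, gaussianPDFReal 0 1 x * (1 + l/x^2) ^ (-(Y/2)))
      = ∫ z in Ioi (0:ℝ), gammaPDFReal (1/2) 1 z * (1 + l/(2*z)) ^ (-(Y/2)) := by
  set q : ℝ → ℝ := fun x => gaussianPDFReal 0 1 x * (1 + l/x^2) ^ (-(Y/2)) with hq
  set g : ℝ → ℝ := fun u => gammaPDFReal (1/2) 1 (u/2) * (1 + l/u) ^ (-(Y/2)) / 2 with hg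
  set H : ℝ → ℝ := fun z => gammaPDFReal (1/2) 1 z * (1 + l/(2*z)) ^ (-(Y/2)) with hH
  have heven : ∀ x, q (-x) = q x := by
    intro x
    simp only [hq, gaussianPDFReal, neg_sq, sub_zero]
  have hsplit : ∫ x, q x = 2 * ∫ x in Ioi (0:ℝ), q x := by
    rw [← integral_comp_abs (f := q)]
    refine integral_congr_ae (ae_of_all _ (fun x => ?_))
    show q x = q |x|
    rcases abs_choice x with h | h
    · rw [h]
    · rw [h, heven]
  have claim1 : ∀ x ∈ Ioi (0:ℝ), (|(2:ℝ)| * x ^ ((2:ℝ)-1)) • g (x ^ (2:ℝ)) = 2 * q x := by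
    intro x hx
    rw [mem_Ioi] at hx
    have hx2 : (0:ℝ) < x^2 := by positivity
    rw [show ((2:ℝ)-1) = (1:ℝ) by norm_num, Real.rpow_one, abs_of_pos (by norm_num : (0:ℝ) < 2)]
    rw [show (x ^ (2:ℝ)) = x^2 by rw [show ((2:ℝ)) = ((2:ℕ):ℝ) by norm_num, Real.rpow_natCast]]
    simp only [hg, hq, smul_eq_mul]
    rw [gammaPDFReal, if_pos (by positivity : (0:ℝ) ≤ x^2/2), Real.Gamma_one_half_eq,
      Real.one_rpow, show ((1:ℝ)/2 - 1 : ℝ) = -(1/2) by norm_num]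
    have e1 : (x^2/2 : ℝ) ^ (-(1/2) : ℝ) = x⁻¹ * Real.sqrt 2 := by
      rw [show (x^2/2 : ℝ) = x^2 * 2⁻¹ by ring, Real.mul_rpow (by positivity) (by positivity)]
      congr 1
      · rw [← Real.rpow_natCast x 2, ← Real.rpow_mul hx.le, show ((2:ℕ):ℝ) * (-(1/2)) = -1 by norm_num,
          Real.rpow_neg_one]
      · rw [← Real.rpow_neg_one 2, ← Real.rpow_mul (by norm_num : (0:ℝ) ≤ 2),
          show ((-1:ℝ)) * (-(1/2)) = 1/2 by norm_num, ← Real.sqrt_eq_rpow]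
    rw [e1]
    simp only [gaussianPDFReal, NNReal.coe_one, mul_one, sub_zero]
    rw [show Real.sqrt (2*π) = Real.sqrt 2 * Real.sqrt π from Real.sqrt_mul (by norm_num) π]
    rw [show (-(1 * (x^2/2))) = -x^2/2 by ring]
    have h2 : Real.sqrt 2 ≠ 0 := by positivity
    have hπ : Real.sqrt π ≠ 0 := by positivity
    field_simp
    ring_nf
    rw [Real.sq_sqrt (by norm_num : (0:ℝ) ≤ 2)]
  have claim2 : ∫ u in Ioi (0:ℝ), g u = ∫ z in Ioi (0:ℝ), H z := by
    have hcomp := integral_comp_mul_left_Ioi H 0 (by norm_num : (0:ℝ) < 1/2)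
    have hgH : ∀ u, H ((1/2)*u) = 2 * g u := by
      intro u
      simp only [hg, hH]
      rw [show (1/2:ℝ)*u = u/2 by ring, show (2*(u/2):ℝ) = u by ring]
      ring
    rw [mul_zero] at hcomp
    calc ∫ u in Ioi (0:ℝ), g u = ∫ u in Ioi (0:ℝ), (1/2) * H ((1/2)*u) := by
          refine setIntegral_congr_fun measurableSet_Ioi (fun u _ => ?_)
          rw [hgH u]; ring
      _ = (1/2) * ∫ u in Ioi (0:ℝ), H ((1/2)*u) := integral_const_mul _ _
      _ = ∫ z in Ioi (0:ℝ), H z := by rw [hcomp, smul_eq_mul]; ring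
  calc ∫ x, q x = 2 * ∫ x in Ioi (0:ℝ), q x := hsplit
    _ = ∫ x in Ioi (0:ℝ), (|(2:ℝ)| * x ^ ((2:ℝ)-1)) • g (x ^ (2:ℝ)) := by
        rw [← integral_const_mul]
        exact (setIntegral_congr_fun measurableSet_Ioi claim1).symm
    _ = ∫ u in Ioi (0:ℝ), g u := integral_comp_rpow_Ioi g two_ne_zero
    _ = ∫ z in Ioi (0:ℝ), H z := claim2

lemma gammaMeasure_Iic_zero {a : ℝ} : gammaMeasure a 1 (Iic 0) = 0 := by
  rw [gammaMeasure, withDensity_apply _ measurableSet_Iic,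
    ← MeasureTheory.Measure.restrict_congr_set Iio_ae_eq_Iic,
    setLIntegral_congr_fun_ae measurableSet_Iio
      (ae_of_all _ (fun x (hx : x < 0) => gammaPDF_of_neg hx)), lintegral_zero]

lemma gammaMeasure_ae_pos {a : ℝ} : ∀ᵐ x ∂(gammaMeasure a 1), 0 < x := by
  rw [ae_iff]
  convert gammaMeasure_Iic_zero (a := a) using 2
  ext x; simp [not_lt]

lemma gaussianReal_ae_ne_zero : ∀ᵐ x ∂(gaussianReal 0 1), x ≠ 0 := by
  rw [ae_iff]
  have : {x : ℝ | ¬ x ≠ 0} = {0} := by ext x; simp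
  rw [this]
  exact (gaussianReal_absolutelyContinuous 0 one_ne_zero) (measure_singleton 0)

lemma ae_fst_prod {μ ν : Measure ℝ} [SigmaFinite ν] {p : ℝ → Prop}
    (hp : ∀ᵐ x ∂μ, p x) : ∀ᵐ z ∂(μ.prod ν), p z.1 := by
  rw [ae_iff] at hp ⊢
  have h : {z : ℝ×ℝ | ¬ p z.1} = {x | ¬ p x} ×ˢ univ := by ext z; simp
  rw [h, Measure.prod_prod, hp, zero_mul]

lemma ae_snd_prod {μ ν : Measure ℝ} [IsFiniteMeasure μ] [SigmaFinite ν] {p : ℝ → Prop}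
    (hp : ∀ᵐ y ∂ν, p y) : ∀ᵐ z ∂(μ.prod ν), p z.2 := by
  rw [ae_iff] at hp ⊢
  have h : {z : ℝ×ℝ | ¬ p z.2} = univ ×ˢ {y | ¬ p y} := by ext z; simp
  rw [h, Measure.prod_prod, hp, mul_zero]

lemma exp_tail {u : ℝ} (hu : 0 ≤ u) :
    gammaMeasure 1 1 (Ici u) = ENNReal.ofReal (Real.exp (-u)) := by
  rw [gammaMeasure, withDensity_apply _ measurableSet_Ici]
  have h1 : ∀ x ∈ Ici u, gammaPDF 1 1 x = ENNReal.ofReal (Real.exp (-x)) := by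
    intro x hx
    rw [mem_Ici] at hx
    rw [gammaPDF_of_nonneg (le_trans hu hx), Real.Gamma_one, Real.rpow_one, sub_self,
      Real.rpow_zero]
    norm_num
  rw [setLIntegral_congr_fun_ae measurableSet_Ici (ae_of_all _ h1)]
  have hInt : IntegrableOn (fun x => Real.exp (-x)) (Ici u) := by
    rw [integrableOn_Ici_iff_integrableOn_Ioi]
    have := exp_neg_integrableOn_Ioi u (one_pos)
    simpa using this
  rw [← ofReal_integral_eq_lintegral_ofReal hInt (ae_of_all _ (fun x => (Real.exp_pos _).le)),
    integral_Ici_eq_integral_Ioi, integral_exp_neg_Ioi]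

lemma iIndepFun_congr {Ω : Type*} [MeasurableSpace Ω] {μ : Measure Ω} {f g : Fin 4 → Ω → ℝ}
    (h : iIndepFun f μ) (hfg : ∀ i, f i =ᵐ[μ] g i) :
    iIndepFun g μ := by
  rw [iIndepFun_iff_measure_inter_preimage_eq_mul] at h ⊢
  intro S sets hsets
  have hae : ∀ᵐ ω ∂μ, ∀ i, f i ω = g i ω := ae_all_iff.2 hfg
  have h1 : μ (⋂ i ∈ S, g i ⁻¹' sets i) = μ (⋂ i ∈ S, f i ⁻¹' sets i) := by
    refine measure_congr (Filter.eventuallyEq_set.2 ?_)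
    filter_upwards [hae] with ω hω
    simp only [mem_iInter, mem_preimage]
    constructor
    · intro H i hi; rw [hω i]; exact H i hi
    · intro H i hi; rw [← hω i]; exact H i hi
  have h2 : ∀ i ∈ S, μ (g i ⁻¹' sets i) = μ (f i ⁻¹' sets i) := by
    intro i _
    refine measure_congr (Filter.eventuallyEq_set.2 ?_)
    filter_upwards [hfg i] with ω hω
    simp only [mem_preimage, hω]
  rw [h1, h S hsets]
  exact (Finset.prod_congr rfl h2).symm

theorem part2 {Ω : Type*} [MeasureSpace Ω] [IsProbabilityMeasure (ℙ : Measure Ω)]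
    {Y l : ℝ} (hY0 : 0 < Y) (hY2 : Y < 2) (hl : 0 < l) {X Z : Ω → ℝ}
    (mX : Measurable X) (mZ : Measurable Z)
    (hX : Measure.map X ℙ = gammaMeasure (Y/2) 1)
    (hZ : Measure.map Z ℙ = gammaMeasure (1/2) 1)
    (hXZ : IndepFun X Z ℙ) :
    JFun Y l = ∫ ω, Real.exp (-((l/2) * (X ω / Z ω))) ∂ℙ := by
  have hY0' : 0 < Y/2 := by positivity
  have hY2' : Y/2 < 1 := by linarith
  haveI hPa : IsProbabilityMeasure (gammaMeasure (Y/2) 1) := isProbabilityMeasure_gammaMeasure hY0' one_pos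
  haveI hPh : IsProbabilityMeasure (gammaMeasure ((1:ℝ)/2) 1) :=
    isProbabilityMeasure_gammaMeasure (by norm_num) one_pos
  set f2 : ℝ × ℝ → ℝ := fun p => Real.exp (-((l/2) * (p.1 / p.2))) with hf2
  have mf2 : Measurable f2 := (((measurable_fst.div measurable_snd).const_mul (l/2)).neg).exp
  have hmap : Measure.map (fun ω => (X ω, Z ω)) ℙ
      = (gammaMeasure (Y/2) 1).prod (gammaMeasure (1/2) 1) := by
    rw [← hX, ← hZ]
    exact (indepFun_iff_map_prod_eq_prod_map_map mX.aemeasurable mZ.aemeasurable).1 hXZ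
  have hint : Integrable f2 ((gammaMeasure (Y/2) 1).prod (gammaMeasure (1/2) 1)) := by
    refine (integrable_const 1).mono' mf2.aestronglyMeasurable ?_
    filter_upwards [ae_fst_prod (ν := gammaMeasure (1/2) 1) (gammaMeasure_ae_pos (a := Y/2)),
      ae_snd_prod (μ := gammaMeasure (Y/2) 1) (gammaMeasure_ae_pos (a := 1/2))] with p h1 h2
    rw [Real.norm_eq_abs, abs_of_pos (Real.exp_pos _), Real.exp_le_one_iff]
    have : 0 ≤ l/2 * (p.1/p.2) := by positivity
    linarith
  calc JFun Y l
      = ∫ z in Ioi (0:ℝ), gammaPDFReal (1/2) 1 z * (1 + l/(2*z)) ^ (-(Y/2)) :=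
        JFun_eq_gamma_int hl
    _ = ∫ z, gammaPDFReal (1/2) 1 z * (1 + l/(2*z)) ^ (-(Y/2)) :=
        setIntegral_eq_integral_of_forall_compl_eq_zero
          (fun z hz => by rw [gammaPDFReal_vanish (by norm_num) hz, zero_mul])
    _ = ∫ z, (1 + l/(2*z)) ^ (-(Y/2)) ∂(gammaMeasure (1/2) 1) :=
        (integral_gammaMeasure_eq (by norm_num) _).symm
    _ = ∫ z, (∫ x, f2 (x, z) ∂(gammaMeasure (Y/2) 1)) ∂(gammaMeasure (1/2) 1) := by
        refine integral_congr_ae ?_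
        filter_upwards [gammaMeasure_ae_pos (a := (1:ℝ)/2)] with z hz
        rw [← gamma_laplace hY0' hY2' (s := l/(2*z)) (by positivity)]
        refine integral_congr_ae (ae_of_all _ (fun x => ?_))
        simp only [hf2]
        congr 1
        field_simp
    _ = ∫ p, f2 p ∂((gammaMeasure (Y/2) 1).prod (gammaMeasure (1/2) 1)) :=
        (integral_prod_symm f2 hint).symm
    _ = ∫ ω, f2 (X ω, Z ω) ∂ℙ := by
        rw [← hmap, integral_map (mX.aemeasurable.prodMk mZ.aemeasurable)
          mf2.aestronglyMeasurable]
    _ = ∫ ω, Real.exp (-((l/2) * (X ω / Z ω))) ∂ℙ := rfl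

theorem part1 {Ω : Type*} [MeasureSpace Ω] [IsProbabilityMeasure (ℙ : Measure Ω)]
    {Y l : ℝ} (hY0 : 0 < Y) (hY2 : Y < 2) (hl : 0 < l) {X W G : Ω → ℝ}
    (mX : Measurable X) (mW : Measurable W) (mG : Measurable G)
    (hX : Measure.map X ℙ = gammaMeasure (Y/2) 1)
    (hW : Measure.map W ℙ = gammaMeasure 1 1)
    (hG : Measure.map G ℙ = gaussianReal 0 1)
    (hXG : IndepFun X G ℙ)
    (hPairW : IndepFun (fun ω => (X ω, G ω)) W ℙ) :
    ENNReal.ofReal (JFun Y l) = ℙ {ω | l * (X ω / W ω) ≤ (G ω)^2} := by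
  have hY0' : 0 < Y/2 := by positivity
  have hY2' : Y/2 < 1 := by linarith
  haveI hPa : IsProbabilityMeasure (gammaMeasure (Y/2) 1) := isProbabilityMeasure_gammaMeasure hY0' one_pos
  haveI hP1 : IsProbabilityMeasure (gammaMeasure (1:ℝ) 1) := isProbabilityMeasure_gammaMeasure one_pos one_pos
  have haeX : ∀ᵐ ω ∂ℙ, 0 < X ω := by
    have h0 : ℙ (X ⁻¹' (Iic 0)) = 0 := by
      rw [← Measure.map_apply mX measurableSet_Iic, hX]; exact gammaMeasure_Iic_zero
    have hs : {ω | ¬ 0 < X ω} = X ⁻¹' (Iic 0) := by ext ω; simp [not_lt]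
    rw [ae_iff, hs]; exact h0
  have haeW : ∀ᵐ ω ∂ℙ, 0 < W ω := by
    have h0 : ℙ (W ⁻¹' (Iic 0)) = 0 := by
      rw [← Measure.map_apply mW measurableSet_Iic, hW]; exact gammaMeasure_Iic_zero
    have hs : {ω | ¬ 0 < W ω} = W ⁻¹' (Iic 0) := by ext ω; simp [not_lt]
    rw [ae_iff, hs]; exact h0
  have haeG : ∀ᵐ ω ∂ℙ, G ω ≠ 0 := by
    have h0 : ℙ (G ⁻¹' {0}) = 0 := by
      rw [← Measure.map_apply mG (measurableSet_singleton 0), hG]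
      exact (gaussianReal_absolutelyContinuous 0 one_ne_zero) (measure_singleton 0)
    have hs : {ω | ¬ G ω ≠ 0} = G ⁻¹' {0} := by ext ω; simp
    rw [ae_iff, hs]; exact h0
  set U : Ω → ℝ := fun ω => l * X ω / (G ω)^2 with hU
  have mU : Measurable U := (mX.const_mul l).div (mG.pow_const 2)
  have hevent : ℙ {ω | l * (X ω / W ω) ≤ (G ω)^2} = ℙ {ω | U ω ≤ W ω} := by
    refine measure_congr (Filter.eventuallyEq_set.2 ?_)
    filter_upwards [haeX, haeW, haeG] with ω h1 h2 h3
    simp only [mem_setOf_eq, hU]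
    have hG2 : 0 < (G ω)^2 := by positivity
    rw [← mul_div_assoc, div_le_iff₀ h2, div_le_iff₀ hG2, mul_comm (W ω) ((G ω)^2)]
  have hUWindep : IndepFun U W ℙ := by
    have hφ : Measurable (fun p : ℝ × ℝ => l * p.1 / p.2^2) :=
      (measurable_fst.const_mul l).div (measurable_snd.pow_const 2)
    exact hPairW.comp hφ measurable_id
  have hmapUW : Measure.map (fun ω => (U ω, W ω)) ℙ
      = (Measure.map U ℙ).prod (gammaMeasure 1 1) := by
    rw [← hW]
    exact (indepFun_iff_map_prod_eq_prod_map_map mU.aemeasurable mW.aemeasurable).1 hUWindep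
  haveI : IsProbabilityMeasure (Measure.map U ℙ) := Measure.isProbabilityMeasure_map mU.aemeasurable
  have haeU : ∀ᵐ u ∂(Measure.map U ℙ), 0 < u := by
    rw [ae_map_iff mU.aemeasurable (measurableSet_Ioi (a := (0:ℝ)))]
    filter_upwards [haeX, haeG] with ω h1 h3
    exact div_pos (by positivity) (by positivity)
  have hIntExp : Integrable (fun u => Real.exp (-u)) (Measure.map U ℙ) := by
    refine (integrable_const 1).mono' (measurable_neg.exp).aestronglyMeasurable ?_
    filter_upwards [haeU] with u hu
    rw [Real.norm_eq_abs, abs_of_pos (Real.exp_pos _), Real.exp_le_one_iff]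
    linarith
  have hPevent : ℙ {ω | U ω ≤ W ω}
      = ENNReal.ofReal (∫ u, Real.exp (-u) ∂(Measure.map U ℙ)) := by
    have hset : MeasurableSet {p : ℝ × ℝ | p.1 ≤ p.2} :=
      measurableSet_le measurable_fst measurable_snd
    rw [show {ω | U ω ≤ W ω} = (fun ω => (U ω, W ω)) ⁻¹' {p : ℝ × ℝ | p.1 ≤ p.2} from rfl,
      ← Measure.map_apply (mU.prodMk mW) hset, hmapUW, Measure.prod_apply hset]
    calc ∫⁻ u, gammaMeasure 1 1 (Prod.mk u ⁻¹' {p : ℝ × ℝ | p.1 ≤ p.2}) ∂(Measure.map U ℙ)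
        = ∫⁻ u, ENNReal.ofReal (Real.exp (-u)) ∂(Measure.map U ℙ) := by
          refine lintegral_congr_ae ?_
          filter_upwards [haeU] with u hu
          rw [show (Prod.mk u ⁻¹' {p : ℝ × ℝ | p.1 ≤ p.2}) = Ici u from rfl, exp_tail hu.le]
      _ = ENNReal.ofReal (∫ u, Real.exp (-u) ∂(Measure.map U ℙ)) :=
          (ofReal_integral_eq_lintegral_ofReal hIntExp
            (ae_of_all _ fun u => (Real.exp_pos _).le)).symm
  have hmapXG : Measure.map (fun ω => (X ω, G ω)) ℙ
      = (gammaMeasure (Y/2) 1).prod (gaussianReal 0 1) := by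
    rw [← hX, ← hG]
    exact (indepFun_iff_map_prod_eq_prod_map_map mX.aemeasurable mG.aemeasurable).1 hXG
  set f1 : ℝ × ℝ → ℝ := fun p => Real.exp (-(l * p.1 / p.2^2)) with hf1
  have mf1 : Measurable f1 :=
    (((measurable_fst.const_mul l).div (measurable_snd.pow_const 2)).neg).exp
  have hint1 : Integrable f1 ((gammaMeasure (Y/2) 1).prod (gaussianReal 0 1)) := by
    refine (integrable_const 1).mono' mf1.aestronglyMeasurable ?_
    filter_upwards [ae_fst_prod (ν := gaussianReal 0 1) (gammaMeasure_ae_pos (a := Y/2))]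
      with p h1
    rw [Real.norm_eq_abs, abs_of_pos (Real.exp_pos _), Real.exp_le_one_iff]
    have : 0 ≤ l * p.1 / p.2^2 := div_nonneg (by positivity) (sq_nonneg _)
    linarith
  have hEint : ∫ u, Real.exp (-u) ∂(Measure.map U ℙ) = JFun Y l := by
    rw [integral_map mU.aemeasurable (measurable_neg.exp).aestronglyMeasurable]
    calc ∫ ω, Real.exp (-(U ω)) ∂ℙ
        = ∫ ω, f1 (X ω, G ω) ∂ℙ := rfl
      _ = ∫ p, f1 p ∂((gammaMeasure (Y/2) 1).prod (gaussianReal 0 1)) := by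
          rw [← hmapXG, integral_map (mX.aemeasurable.prodMk mG.aemeasurable)
            mf1.aestronglyMeasurable]
      _ = ∫ g, (∫ x, f1 (x, g) ∂(gammaMeasure (Y/2) 1)) ∂(gaussianReal 0 1) :=
          integral_prod_symm f1 hint1
      _ = ∫ g, (1 + l/g^2) ^ (-(Y/2)) ∂(gaussianReal 0 1) := by
          refine integral_congr_ae ?_
          filter_upwards [gaussianReal_ae_ne_zero] with g hg
          rw [← gamma_laplace hY0' hY2' (s := l/g^2) (div_nonneg hl.le (sq_nonneg _))]
          refine integral_congr_ae (ae_of_all _ (fun x => ?_))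
          simp only [hf1]
          congr 1
          have hg2 : g^2 ≠ 0 := pow_ne_zero 2 hg
          field_simp
      _ = ∫ g, gaussianPDFReal 0 1 g * (1 + l/g^2) ^ (-(Y/2)) := integral_gaussianReal_eq _
      _ = ∫ z in Ioi (0:ℝ), gammaPDFReal (1/2) 1 z * (1 + l/(2*z)) ^ (-(Y/2)) :=
          gauss_eq_gamma_int hY0 hl
      _ = JFun Y l := (JFun_eq_gamma_int hl).symm
  rw [hevent, hPevent, hEint]

/-- Probabilistic representations of `J_Y(λ)`: it equals `P(G² ≥ λ X/W)` and also
`E[exp(-(λ/2)·X/Z)]` for `X ~ Gamma(Y/2)`, `W ~ Gamma(1)`, `Z ~ Gamma(1/2)` and `G`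
standard normal, all mutually independent. -/
theorem JFun_probabilistic_representation {Ω : Type*} [MeasureSpace Ω]
    [IsProbabilityMeasure (ℙ : Measure Ω)] (Y : ℝ) (hY0 : 0 < Y) (hY2 : Y < 2)
    (X W Z G : Ω → ℝ)
    (hX : Measure.map X ℙ = gammaMeasure (Y/2) 1)
    (hW : Measure.map W ℙ = gammaMeasure 1 1)
    (hZ : Measure.map Z ℙ = gammaMeasure (1/2) 1)
    (hG : Measure.map G ℙ = gaussianReal 0 1)
    (hindep : iIndepFun ![X, W, Z, G] ℙ) :
    ∀ l : ℝ, 0 < l →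
      ENNReal.ofReal (JFun Y l) = ℙ {ω | l * (X ω / W ω) ≤ (G ω)^2} ∧
      JFun Y l = ∫ ω, Real.exp (-((l/2) * (X ω / Z ω))) ∂ℙ := by
  intro l hl
  haveI iPX : IsProbabilityMeasure (gammaMeasure (Y/2) 1) :=
    isProbabilityMeasure_gammaMeasure (by positivity) one_pos
  haveI iPW : IsProbabilityMeasure (gammaMeasure (1:ℝ) 1) :=
    isProbabilityMeasure_gammaMeasure one_pos one_pos
  haveI iPZ : IsProbabilityMeasure (gammaMeasure ((1:ℝ)/2) 1) :=
    isProbabilityMeasure_gammaMeasure (by norm_num) one_pos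
  have hXm : AEMeasurable X ℙ := by
    by_contra h
    have h1 : (gammaMeasure (Y/2) 1) univ = 1 := measure_univ
    rw [← hX, Measure.map_of_not_aemeasurable h] at h1
    simp at h1
  have hWm : AEMeasurable W ℙ := by
    by_contra h
    have h1 : (gammaMeasure (1:ℝ) 1) univ = 1 := measure_univ
    rw [← hW, Measure.map_of_not_aemeasurable h] at h1
    simp at h1
  have hZm : AEMeasurable Z ℙ := by
    by_contra h
    have h1 : (gammaMeasure ((1:ℝ)/2) 1) univ = 1 := measure_univ
    rw [← hZ, Measure.map_of_not_aemeasurable h] at h1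
    simp at h1
  have hGm : AEMeasurable G ℙ := by
    by_contra h
    have h1 : (gaussianReal 0 1) univ = 1 := measure_univ
    rw [← hG, Measure.map_of_not_aemeasurable h] at h1
    simp at h1
  have hfg : ∀ i, (![X, W, Z, G] : Fin 4 → Ω → ℝ) i
      =ᵐ[ℙ] (![hXm.mk X, hWm.mk W, hZm.mk Z, hGm.mk G] : Fin 4 → Ω → ℝ) i := by
    intro i
    fin_cases i
    · simpa using hXm.ae_eq_mk
    · simpa using hWm.ae_eq_mk
    · simpa using hZm.ae_eq_mk
    · simpa using hGm.ae_eq_mk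
  have hindep' := iIndepFun_congr hindep hfg
  have hX' : Measure.map (hXm.mk X) ℙ = gammaMeasure (Y/2) 1 := by
    rw [← Measure.map_congr hXm.ae_eq_mk]; exact hX
  have hW' : Measure.map (hWm.mk W) ℙ = gammaMeasure 1 1 := by
    rw [← Measure.map_congr hWm.ae_eq_mk]; exact hW
  have hZ' : Measure.map (hZm.mk Z) ℙ = gammaMeasure (1/2) 1 := by
    rw [← Measure.map_congr hZm.ae_eq_mk]; exact hZ
  have hG' : Measure.map (hGm.mk G) ℙ = gaussianReal 0 1 := by
    rw [← Measure.map_congr hGm.ae_eq_mk]; exact hG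
  have hmeas4 : ∀ i, Measurable ((![hXm.mk X, hWm.mk W, hZm.mk Z, hGm.mk G] : Fin 4 → Ω → ℝ) i) := by
    intro i
    fin_cases i
    exacts [hXm.measurable_mk, hWm.measurable_mk, hZm.measurable_mk, hGm.measurable_mk]
  have hXZ' : IndepFun (hXm.mk X) (hZm.mk Z) ℙ := by
    have := hindep'.indepFun (show (0:Fin 4) ≠ 2 by decide)
    simpa using this
  have hXG' : IndepFun (hXm.mk X) (hGm.mk G) ℙ := by
    have := hindep'.indepFun (show (0:Fin 4) ≠ 3 by decide)
    simpa using this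
  have hPairW' : IndepFun (fun ω => (hXm.mk X ω, hGm.mk G ω)) (hWm.mk W) ℙ := by
    have := hindep'.indepFun_prodMk hmeas4 0 3 1 (by decide) (by decide)
    simpa using this
  constructor
  · rw [part1 hY0 hY2 hl hXm.measurable_mk hWm.measurable_mk hGm.measurable_mk
      hX' hW' hG' hXG' hPairW']
    refine measure_congr (Filter.eventuallyEq_set.2 ?_)
    filter_upwards [hXm.ae_eq_mk, hWm.ae_eq_mk, hGm.ae_eq_mk] with ω e1 e2 e3
    simp only [mem_setOf_eq, ← e1, ← e2, ← e3]
  · rw [part2 hY0 hY2 hl hXm.measurable_mk hZm.measurable_mk hX' hZ' hXZ']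
    refine integral_congr_ae ?_
    filter_upwards [hXm.ae_eq_mk, hZm.ae_eq_mk] with ω e1 e3
    rw [← e1, ← e3]
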